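/- For every integer k ≥ 0, the sum of the entries of the vector w_k equals √(μ_k - 1). -/
import Mathlib

/-- β_i = 1 + (1+√2)^{i-1} (real exponent). -/
noncomputable def beta (i : ℕ) : ℝ := 1 + (1 + Real.sqrt 2) ^ ((i : ℝ) - 1)

/-- π^(ℓ) ∈ ℝ^{2^ℓ - 1}, with i-th entry β_{ν(i)} (ν the 2-adic valuation). -/
noncomputable def piList (ℓ : ℕ) : List ℝ :=
  (List.range (2 ^ ℓ - 1)).map fun i => beta (padicValNat 2 (i + 1))

lemma sqrt2_pos : (0:ℝ) < 1 + Real.sqrt 2 := by positivity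

lemma val_add_pow (ℓ m : ℕ) (hm : 0 < m) (hlt : m < 2 ^ ℓ) :
    padicValNat 2 (2 ^ ℓ + m) = padicValNat 2 m := by
  haveI : Fact (Nat.Prime 2) := ⟨Nat.prime_two⟩
  set v := padicValNat 2 m with hv
  have hd : 2 ^ v ∣ m := pow_padicValNat_dvd
  have hnd : ¬ 2 ^ (v + 1) ∣ m := pow_succ_padicValNat_not_dvd hm.ne'
  have hvlt : v < ℓ := by
    by_contra h
    push_neg at h
    exact absurd (Nat.le_of_dvd hm hd) (by
      have : 2 ^ ℓ ≤ 2 ^ v := Nat.pow_le_pow_right (by norm_num) h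
      omega)
  have hd' : 2 ^ v ∣ 2 ^ ℓ + m := Dvd.dvd.add (pow_dvd_pow 2 hvlt.le) hd
  have hnd' : ¬ 2 ^ (v + 1) ∣ 2 ^ ℓ + m := by
    intro h
    exact hnd ((Nat.dvd_add_right (pow_dvd_pow 2 hvlt)).mp h)
  have h1 : padicValNat 2 (2 ^ ℓ + m) = multiplicity 2 (2 ^ ℓ + m) :=
    padicValNat_def (by positivity)
  rw [h1, multiplicity_eq_of_dvd_of_not_dvd hd' hnd']

lemma sum_map_div (l : List ℝ) (s : ℝ) :
    (l.map (fun y => y / s)).sum = l.sum / s := by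
  induction l with
  | nil => simp
  | cons a t ih => simp [ih, add_div]

lemma piList_sum (ℓ : ℕ) :
    (piList ℓ).sum = (1 + Real.sqrt 2) ^ (ℓ : ℝ) - 1 := by
  induction ℓ with
  | zero => simp [piList]
  | succ n ih =>
    have hsplit : 2 ^ (n + 1) - 1 = (2 ^ n - 1) + (1 + (2 ^ n - 1)) := by
      have h2 : 1 ≤ 2 ^ n := Nat.one_le_two_pow
      have : 2 ^ (n + 1) = 2 ^ n + 2 ^ n := by ring
      omega
    have hg : ∀ j ∈ List.range (2 ^ n - 1),
        beta (padicValNat 2 ((2 ^ n - 1) + (1 + j) + 1)) = beta (padicValNat 2 (j + 1)) := by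
      intro j hj
      rw [List.mem_range] at hj
      have h2 : 1 ≤ 2 ^ n := Nat.one_le_two_pow
      have he : (2 ^ n - 1) + (1 + j) + 1 = 2 ^ n + (j + 1) := by omega
      rw [he, val_add_pow n (j + 1) (by omega) (by omega)]
    have hmid : beta (padicValNat 2 ((2 ^ n - 1) + 0 + 1)) = beta n := by
      have h2 : 1 ≤ 2 ^ n := Nat.one_le_two_pow
      have he : (2 ^ n - 1) + 0 + 1 = 2 ^ n := by omega
      rw [he]
      haveI : Fact (Nat.Prime 2) := ⟨Nat.prime_two⟩
      rw [padicValNat.prime_pow]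
    rw [piList, hsplit, List.range_add, List.map_append, List.sum_append, List.map_map,
      List.range_add, List.map_append, List.sum_append]
    simp only [Function.comp_def, List.map_map]
    rw [show List.range 1 = [0] from rfl]
    simp only [List.map_cons, List.map_nil, List.sum_cons, List.sum_nil]
    rw [hmid, List.map_congr_left hg]
    rw [show ((List.range (2 ^ n - 1)).map fun j => beta (padicValNat 2 (j + 1))).sum
        = (piList n).sum from rfl, ih]
    -- now algebra with rpow
    have hc := sqrt2_pos
    have hsq : Real.sqrt 2 * Real.sqrt 2 = 2 := Real.mul_self_sqrt (by norm_num)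
    have key : (1 + Real.sqrt 2) ^ ((n : ℝ) - 1) * (1 + Real.sqrt 2) ^ (2 : ℝ)
        = (1 + Real.sqrt 2) ^ ((n + 1 : ℕ) : ℝ) := by
      rw [← Real.rpow_add hc]
      norm_num
      ring_nf
    have h2 : (1 + Real.sqrt 2) ^ (2 : ℝ) = 3 + 2 * Real.sqrt 2 := by
      rw [show (2:ℝ) = ((2:ℕ):ℝ) by norm_num, Real.rpow_natCast]
      ring_nf
      nlinarith [hsq]
    have h3 : (1 + Real.sqrt 2) ^ ((n : ℝ)) = (1 + Real.sqrt 2) ^ ((n : ℝ) - 1) * (1 + Real.sqrt 2) ^ (1:ℝ) := by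
      rw [← Real.rpow_add hc]; norm_num
    rw [Real.rpow_one] at h3
    rw [beta, ← key, h2, h3]
    ring

/-- with w_0 = [1] and
w_k = [π^(k-1)/√(μ_k-1), β_k/√(μ_k-1), w_{k-1}] for k ≥ 1, the sum of the
entries of w_k equals √(μ_k - 1) for all k ≥ 0. -/
theorem stmt13 (α μ : ℕ → ℝ) (w : ℕ → List ℝ)
    (hμ0 : μ 0 = 2)
    (hμ : ∀ i, μ (i + 1) = μ i + 2 * (α i + beta (i + 1) - 2))
    (hα : ∀ i, 1 < α i ∧
      2 * (α i - 1) ^ 2 + (μ i - 1) * (α i - 1) - (beta (i + 1) - 1) * (μ i - 1) = 0)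
    (hw0 : w 0 = [1])
    (hw : ∀ k : ℕ, w (k + 1) =
      ((piList k).map fun y => y / Real.sqrt (μ (k + 1) - 1))
        ++ [beta (k + 1) / Real.sqrt (μ (k + 1) - 1)] ++ w k) :
    ∀ k : ℕ, (w k).sum = Real.sqrt (μ k - 1) := by
  have hc := sqrt2_pos
  have hbeta : ∀ i : ℕ, 1 < beta (i + 1) := by
    intro i
    unfold beta
    nlinarith [Real.rpow_pos_of_pos hc (((i + 1 : ℕ) : ℝ) - 1)]
  have hμpos : ∀ k, 1 < μ k := by
    intro k
    induction k with
    | zero => rw [hμ0]; norm_num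
    | succ n ih =>
      have h1 := (hα n).1
      have h2 := hbeta n
      rw [hμ n]; nlinarith
  intro k
  induction k with
  | zero => rw [hw0, hμ0]; norm_num
  | succ n ih =>
    set A := μ (n + 1) - 1 with hA
    set B := μ n - 1 with hB
    have hBpos : 0 < B := by have := hμpos n; simp [hB]; linarith
    have hα1 := (hα n).1
    have hα2 := (hα n).2
    have hAval : A = B + 2 * (α n - 1) + 2 * (beta (n + 1) - 1) := by
      rw [hA, hB, hμ n]; ring
    have hApos : 0 < A := by
      have := hbeta n; rw [hAval]; nlinarith
    have hAB : A * B = (B + 2 * (α n - 1)) ^ 2 := by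
      rw [hAval]; nlinarith
    have hsAB : Real.sqrt A * Real.sqrt B = B + 2 * (α n - 1) := by
      rw [← Real.sqrt_mul hApos.le, hAB]
      exact Real.sqrt_sq (by nlinarith)
    have hsA : Real.sqrt A * Real.sqrt A = A := Real.mul_self_sqrt hApos.le
    have hsApos : 0 < Real.sqrt A := Real.sqrt_pos.mpr hApos
    rw [hw n, List.sum_append, List.sum_append, sum_map_div, ih, piList_sum,
      List.sum_cons, List.sum_nil]
    have hbval : beta (n + 1) = 1 + (1 + Real.sqrt 2) ^ ((n : ℝ)) := by
      unfold beta; norm_num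
    rw [← hA, hbval]
    have hpow : (1 + Real.sqrt 2) ^ ((n:ℝ)) = (1 + Real.sqrt 2) ^ n := Real.rpow_natCast _ n
    rw [hpow] at hbval
    have hsBA : Real.sqrt B * Real.sqrt A = B + 2 * (α n - 1) := by
      rw [mul_comm]; exact hsAB
    field_simp
    linarith [hsBA, hAval, hbval]
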